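/- Let T ∈ M_{2^n} with ‖T‖_∞ ≤ 1, let J ⊆ [n], and let Inf(T) = Σ_{k=1}^n ‖d_k(T)‖₂² denote the total L₂-influence. Then Σ_{j ∈ J} Inf(R_j^J(T)) ≤ var(T) + Inf(T). -/

import Mathlib

open scoped BigOperators ComplexOrder
open Matrix

noncomputable section

abbrev QM (n : ℕ) := Matrix (Fin n → Fin 2) (Fin n → Fin 2) ℂ

namespace QM

variable {n : ℕ}

/-- Normalized trace on `M_{2^n}`. -/
def qtr (T : QM n) : ℂ := Matrix.trace T / 2 ^ n

/-- Singular values of `T` (eigenvalues of `|T| = (TᴴT)^{1/2}`). -/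
def sv (T : QM n) (i : Fin n → Fin 2) : ℝ :=
  Real.sqrt ((Matrix.posSemidef_conjTranspose_mul_self T).1.eigenvalues i)

/-- Normalized Schatten `p`-norm: `(tr |T|^p)^{1/p}` with normalized trace. -/
def snorm (p : ℝ) (T : QM n) : ℝ :=
  ((∑ i, sv T i ^ p) / 2 ^ n) ^ (1 / p)

/-- Squared normalized `L₂`-norm: `tr(TᴴT)`. -/
def l2sq (T : QM n) : ℝ := (Matrix.trace (Tᴴ * T)).re / 2 ^ n

/-- Variance `‖T - tr(T)1‖₂²`. -/
def qvar (T : QM n) : ℝ := l2sq (T - qtr T • 1)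

/-- Operator norm. -/
def opnorm (T : QM n) : ℝ := ‖Matrix.toEuclideanCLM (𝕜 := ℂ) T‖

/-- The Pauli matrices. -/
def pauli : Fin 4 → Matrix (Fin 2) (Fin 2) ℂ
  | 0 => 1
  | 1 => !![1, 0; 0, -1]
  | 2 => !![0, 1; 1, 0]
  | 3 => !![0, Complex.I; -Complex.I, 0]

/-- The Pauli tensor basis `σ_s` for `s ∈ {0,1,2,3}^n`. -/
def sigma (s : Fin n → Fin 4) : QM n :=
  Matrix.of fun x y => ∏ j, pauli (s j) (x j) (y j)

/-- Fourier coefficient `T̂(s) = tr(σ_s* T)`. -/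
def fc (T : QM n) (s : Fin n → Fin 4) : ℂ := qtr ((sigma s)ᴴ * T)

/-- Support of a multi-index. -/
def supp (s : Fin n → Fin 4) : Finset (Fin n) := Finset.univ.filter fun j => s j ≠ 0

/-- The `k`-th partial derivative, via the Fourier expansion. -/
def djF (k : Fin n) (T : QM n) : QM n :=
  ∑ s ∈ Finset.univ.filter (fun s : Fin n → Fin 4 => s k ≠ 0), fc T s • sigma s

/-- Conditional expectation onto the subalgebra `M_J`. -/
def condExp (J : Finset (Fin n)) (T : QM n) : QM n :=
  ∑ s ∈ Finset.univ.filter (fun s : Fin n → Fin 4 => supp s ⊆ J), fc T s • sigma s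

/-- The restriction operator `R_j^J(T) = 𝓔_{M_{J^c ∪ {j}}}(d_j(T))`. -/
def RR (J : Finset (Fin n)) (j : Fin n) (T : QM n) : QM n :=
  condExp (Jᶜ ∪ {j}) (djF j T)

/-- The operator `δ^𝓛`. -/
def deltaL (δ : ℝ) (T : QM n) : QM n :=
  ∑ s : Fin n → Fin 4, (((δ : ℂ) ^ (supp s).card) * fc T s) • sigma s

/-- The quantum Ornstein–Uhlenbeck semigroup `e^{-t𝓛}`. -/
def heat (t : ℝ) (T : QM n) : QM n :=
  ∑ s : Fin n → Fin 4, ((Real.exp (-t * (supp s).card) : ℂ) * fc T s) • sigma s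

/-- `H_d(T) = (1-1/(2d))^𝓛(T) - (1-1/d)^𝓛(T)`. -/
def Hd (d : ℕ) (T : QM n) : QM n :=
  deltaL (1 - 1 / (2 * (d : ℝ))) T - deltaL (1 - 1 / (d : ℝ)) T

/-- Probability of a subset `J` when each coordinate is included with probability `δ`. -/
def mu (δ : ℝ) (J : Finset (Fin n)) : ℝ := δ ^ J.card * (1 - δ) ^ (n - J.card)

/-- Total `L₂`-influence via Fourier coefficients. -/
def InfF (T : QM n) : ℝ := ∑ s : Fin n → Fin 4, ((supp s).card : ℝ) * ‖fc T s‖ ^ 2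

/-- Spectral weight `W_{≈d}(T)`. -/
def Wapprox (T : QM n) (d : ℕ) : ℝ :=
  ∑ s ∈ Finset.univ.filter
      (fun s : Fin n → Fin 4 => d ≤ (supp s).card ∧ (supp s).card < 2 * d),
    ‖fc T s‖ ^ 2

/-- Conditional expectation onto the algebra with identity in slot `j`
(`id ⊗ ⋯ ⊗ tr(·)1₂ ⊗ ⋯ ⊗ id`). -/
def slotExp (j : Fin n) (T : QM n) : QM n :=
  Matrix.of fun x y =>
    if x j = y j then (∑ b : Fin 2, T (Function.update x j b) (Function.update y j b)) / 2
    else 0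

/-- The `j`-th partial derivative `d_j = id - (id ⊗ ⋯ ⊗ tr(·)1₂ ⊗ ⋯ ⊗ id)`. -/
def dj (j : Fin n) (T : QM n) : QM n := T - slotExp j T

end QM


namespace QM

lemma pauli_orth (a b : Fin 4) :
    ∑ p : Fin 2 × Fin 2, star (pauli a p.1 p.2) * pauli b p.1 p.2
      = if a = b then 2 else 0 := by
  fin_cases a <;> fin_cases b <;>
    simp [pauli, Fintype.sum_prod_type, Fin.sum_univ_two, Complex.ext_iff] <;> norm_num

lemma trace_sigma_mul {n : ℕ} (s t : Fin n → Fin 4) :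
    Matrix.trace ((sigma s)ᴴ * sigma t) = if s = t then (2:ℂ)^n else 0 := by
  have h : Matrix.trace ((sigma s)ᴴ * sigma t)
      = ∑ q : (Fin n → Fin 2) × (Fin n → Fin 2),
          ∏ j, (star (pauli (s j) (q.1 j) (q.2 j)) * pauli (t j) (q.1 j) (q.2 j)) := by
    rw [Matrix.trace]
    simp only [Matrix.diag, Matrix.mul_apply, Matrix.conjTranspose_apply, sigma, Matrix.of_apply,
      star_prod, Fintype.sum_prod_type, ← Finset.prod_mul_distrib]
    rw [Finset.sum_comm]
  rw [h]
  have h2 : ∑ q : (Fin n → Fin 2) × (Fin n → Fin 2),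
          ∏ j, (star (pauli (s j) (q.1 j) (q.2 j)) * pauli (t j) (q.1 j) (q.2 j))
      = ∑ g : Fin n → Fin 2 × Fin 2,
          ∏ j, (star (pauli (s j) (g j).1 (g j).2) * pauli (t j) (g j).1 (g j).2) := by
    apply Fintype.sum_equiv (Equiv.arrowProdEquivProdArrow (Fin n) (fun _ => Fin 2) (fun _ => Fin 2)).symm
    intro q; rfl
  rw [h2, ← Fintype.prod_sum
    (fun j (p : Fin 2 × Fin 2) => star (pauli (s j) p.1 p.2) * pauli (t j) p.1 p.2)]
  simp only [pauli_orth]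
  by_cases hst : s = t
  · simp [hst]
  · rw [if_neg hst]
    obtain ⟨j, hj⟩ := Function.ne_iff.mp hst
    exact Finset.prod_eq_zero (Finset.mem_univ j) (by rw [if_neg hj])

lemma fc_fsum {n : ℕ} (c : (Fin n → Fin 4) → ℂ) (s : Fin n → Fin 4) :
    fc (∑ t, c t • sigma t) s = c s := by
  unfold fc qtr
  rw [Finset.mul_sum, Matrix.trace_sum]
  simp only [Matrix.mul_smul, Matrix.trace_smul, trace_sigma_mul, smul_eq_mul, mul_ite, mul_zero]
  rw [Finset.sum_ite_eq (Finset.univ : Finset (Fin n → Fin 4)) s (fun t => c t * 2^n)]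
  have h2 : ((2:ℂ)^n) ≠ 0 := by positivity
  simp [h2, mul_div_assoc]

lemma l2sq_fsum {n : ℕ} (c : (Fin n → Fin 4) → ℂ) :
    l2sq (∑ s, c s • sigma s) = ∑ s, ‖c s‖^2 := by
  unfold l2sq
  have h : Matrix.trace ((∑ s, c s • sigma s)ᴴ * (∑ t, c t • sigma t))
      = ∑ s, (Complex.normSq (c s) : ℂ) * 2^n := by
    rw [Matrix.conjTranspose_sum, Finset.sum_mul, Matrix.trace_sum]
    congr 1; ext s
    rw [Matrix.conjTranspose_smul, Matrix.smul_mul, Matrix.trace_smul, Finset.mul_sum,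
      Matrix.trace_sum]
    simp only [Matrix.mul_smul, Matrix.trace_smul, trace_sigma_mul, smul_eq_mul, mul_ite, mul_zero]
    rw [Finset.sum_ite_eq (Finset.univ : Finset (Fin n → Fin 4)) s (fun t => c t * 2^n)]
    simp only [Finset.mem_univ, if_true, Complex.star_def]
    rw [Complex.normSq_eq_conj_mul_self]
    ring
  rw [h]
  have h3 : (∑ s : Fin n → Fin 4, (Complex.normSq (c s) : ℂ) * 2^n)
      = (((∑ s : Fin n → Fin 4, Complex.normSq (c s)) * 2^n : ℝ) : ℂ) := by
    push_cast
    rw [Finset.sum_mul]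
  rw [h3, Complex.ofReal_re, mul_div_assoc, div_self (by positivity), mul_one]
  congr 1; ext s
  rw [← Complex.sq_norm]

lemma l2sq_nonneg {n : ℕ} (S : QM n) : 0 ≤ l2sq S := by
  unfold l2sq
  apply div_nonneg _ (by positivity)
  rw [Matrix.trace]
  simp only [Matrix.diag, Matrix.mul_apply, Matrix.conjTranspose_apply]
  rw [Complex.re_sum]
  refine Finset.sum_nonneg fun x _ => ?_
  rw [Complex.re_sum]
  refine Finset.sum_nonneg fun y _ => ?_
  rw [Complex.star_def, ← Complex.normSq_eq_conj_mul_self, Complex.ofReal_re]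
  exact Complex.normSq_nonneg _

lemma djF_eq_fsum {n : ℕ} (k : Fin n) (S : QM n) :
    djF k S = ∑ s, (if s k ≠ 0 then fc S s else 0) • sigma s := by
  rw [djF, Finset.sum_filter]
  congr 1; ext s
  split <;> simp

lemma condExp_eq_fsum {n : ℕ} (J : Finset (Fin n)) (S : QM n) :
    condExp J S = ∑ s, (if supp s ⊆ J then fc S s else 0) • sigma s := by
  rw [condExp, Finset.sum_filter]
  congr 1; ext s
  split <;> simp

lemma fc_djF {n : ℕ} (k : Fin n) (S : QM n) (s : Fin n → Fin 4) :
    fc (djF k S) s = if s k ≠ 0 then fc S s else 0 := by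
  rw [djF_eq_fsum, fc_fsum]

lemma fc_RR {n : ℕ} (J : Finset (Fin n)) (j : Fin n) (T : QM n) (s : Fin n → Fin 4) :
    fc (RR J j T) s
      = if supp s ⊆ Jᶜ ∪ {j} ∧ s j ≠ 0 then fc T s else 0 := by
  rw [RR, condExp_eq_fsum, fc_fsum, fc_djF]
  by_cases h1 : supp s ⊆ Jᶜ ∪ {j} <;> by_cases h2 : s j ≠ 0 <;> simp [h1, h2]

lemma inf_eq {n : ℕ} (S : QM n) :
    ∑ k, l2sq (djF k S) = ∑ s : Fin n → Fin 4, ((supp s).card : ℝ) * ‖fc S s‖^2 := by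
  have h : ∀ k, l2sq (djF k S)
      = ∑ s : Fin n → Fin 4, if s k ≠ 0 then ‖fc S s‖^2 else 0 := by
    intro k
    rw [djF_eq_fsum, l2sq_fsum]
    congr 1; ext s
    split <;> simp
  simp only [h]
  rw [Finset.sum_comm]
  congr 1; ext s
  rw [Finset.sum_ite, Finset.sum_const, Finset.sum_const_zero, add_zero,
    nsmul_eq_mul]
  rfl

end QM

/-- For `T ∈ M_{2^n}` with `‖T‖_∞ ≤ 1` and `J ⊆ [n]`,
`Σ_{j ∈ J} Inf(R_j^J(T)) ≤ var(T) + Inf(T)` where `Inf(S) = Σ_k ‖d_k(S)‖₂²`. -/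
theorem rr_inf {n : ℕ} (T : QM n) (hT : QM.opnorm T ≤ 1) (J : Finset (Fin n)) :
    ∑ j ∈ J, (∑ k, QM.l2sq (QM.djF k (QM.RR J j T))) ≤
      QM.qvar T + ∑ k, QM.l2sq (QM.djF k T) := by
  have key : ∀ j ∈ J, (∑ k, QM.l2sq (QM.djF k (QM.RR J j T)))
      = ∑ s : Fin n → Fin 4, if QM.supp s ⊆ Jᶜ ∪ {j} ∧ s j ≠ 0
          then ((QM.supp s).card : ℝ) * ‖QM.fc T s‖^2 else 0 := by
    intro j _
    rw [QM.inf_eq]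
    congr 1; ext s
    rw [QM.fc_RR]
    split <;> simp
  rw [Finset.sum_congr rfl key, Finset.sum_comm, QM.inf_eq]
  have h2 : ∀ s : Fin n → Fin 4,
      (∑ j ∈ J, if QM.supp s ⊆ Jᶜ ∪ {j} ∧ s j ≠ 0
          then ((QM.supp s).card : ℝ) * ‖QM.fc T s‖^2 else 0)
      ≤ ((QM.supp s).card : ℝ) * ‖QM.fc T s‖^2 := by
    intro s
    rw [Finset.sum_ite, Finset.sum_const, Finset.sum_const_zero, add_zero, nsmul_eq_mul]
    have hcard : ((J.filter (fun j => QM.supp s ⊆ Jᶜ ∪ {j} ∧ s j ≠ 0)).card : ℝ) ≤ 1 := by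
      have : (J.filter (fun j => QM.supp s ⊆ Jᶜ ∪ {j} ∧ s j ≠ 0)).card ≤ 1 := by
        rw [Finset.card_le_one]
        intro a ha b hb
        simp only [Finset.mem_filter] at ha hb
        have hmem : a ∈ Jᶜ ∪ {b} := hb.2.1 (by
          simp only [QM.supp, Finset.mem_filter, Finset.mem_univ, true_and]
          exact ha.2.2)
        rcases Finset.mem_union.mp hmem with h | h
        · exact absurd ha.1 (Finset.mem_compl.mp h)
        · exact Finset.mem_singleton.mp h
      exact_mod_cast this
    calc _ ≤ 1 * (((QM.supp s).card : ℝ) * ‖QM.fc T s‖^2) :=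
          mul_le_mul_of_nonneg_right hcard (by positivity)
      _ = _ := one_mul _
  calc (∑ s : Fin n → Fin 4, ∑ j ∈ J, if QM.supp s ⊆ Jᶜ ∪ {j} ∧ s j ≠ 0
          then ((QM.supp s).card : ℝ) * ‖QM.fc T s‖^2 else 0)
      ≤ ∑ s : Fin n → Fin 4, ((QM.supp s).card : ℝ) * ‖QM.fc T s‖^2 :=
        Finset.sum_le_sum fun s _ => h2 s
    _ ≤ QM.qvar T + ∑ s : Fin n → Fin 4, ((QM.supp s).card : ℝ) * ‖QM.fc T s‖^2 :=
        le_add_of_nonneg_left (QM.l2sq_nonneg _)
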